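/- For every natural number r and every real number x, the r-th iterated central finite difference of x^(r+1) is given by the signed binomial sum ∑_{j=0}^{r} (−1)^j · C(r,j) · (x + r/2 − j)^(r+1) = (r+1)!·x, where C(r,j) denotes the binomial coefficient. -/

import Mathlib

noncomputable def Bsum (r k : ℕ) (x : ℝ) : ℝ :=
  ∑ j ∈ Finset.range (r+1),
    (-1 : ℝ) ^ j * (r.choose j : ℝ) * (x + (r : ℝ)/2 - (j : ℝ)) ^ k

lemma Bsum_pascal (r k : ℕ) (x : ℝ) :
    Bsum (r+1) k x = Bsum r k (x + 1/2) - Bsum r k (x - 1/2) := by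
  have h1 : Bsum (r+1) k x
      = (∑ i ∈ Finset.range (r+1),
          ((-1:ℝ)^(i+1) * (r.choose (i+1) : ℝ) * ((x+1/2) + (r:ℝ)/2 - ((i:ℝ)+1))^k
           - (-1:ℝ)^i * (r.choose i : ℝ) * ((x-1/2) + (r:ℝ)/2 - (i:ℝ))^k))
        + ((x+1/2) + (r:ℝ)/2 - ((0:ℕ):ℝ))^k := by
    unfold Bsum
    rw [Finset.sum_range_succ' _ (r+1)]
    congr 1
    · apply Finset.sum_congr rfl
      intro i _
      rw [Nat.choose_succ_succ]
      push_cast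
      ring
    · push_cast
      simp
      congr 1
      ring
  have h2 : Bsum r k (x+1/2)
      = (∑ i ∈ Finset.range r,
          (-1:ℝ)^(i+1) * (r.choose (i+1) : ℝ) * ((x+1/2) + (r:ℝ)/2 - ((i:ℝ)+1))^k)
        + ((x+1/2) + (r:ℝ)/2 - ((0:ℕ):ℝ))^k := by
    unfold Bsum
    rw [Finset.sum_range_succ' _ r]
    push_cast
    simp
  have h3 : ∑ i ∈ Finset.range (r+1),
        (-1:ℝ)^(i+1) * (r.choose (i+1) : ℝ) * ((x+1/2) + (r:ℝ)/2 - ((i:ℝ)+1))^k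
      = ∑ i ∈ Finset.range r,
        (-1:ℝ)^(i+1) * (r.choose (i+1) : ℝ) * ((x+1/2) + (r:ℝ)/2 - ((i:ℝ)+1))^k := by
    rw [Finset.sum_range_succ]
    simp [Nat.choose_succ_self]
  have h4 : Bsum r k (x-1/2)
      = ∑ i ∈ Finset.range (r+1),
          (-1:ℝ)^i * (r.choose i : ℝ) * ((x-1/2) + (r:ℝ)/2 - (i:ℝ))^k := rfl
  rw [h1, Finset.sum_sub_distrib, h2, h3, h4]
  ring

lemma Bsum_hasDerivAt (r k : ℕ) (y : ℝ) :
    HasDerivAt (fun x => Bsum r (k+1) x) (((k:ℝ)+1) * Bsum r k y) y := by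
  have hterm : ∀ j ∈ Finset.range (r+1), HasDerivAt
      (fun x : ℝ => (-1:ℝ)^j * (r.choose j : ℝ) * (x + (r:ℝ)/2 - (j:ℝ))^(k+1))
      ((-1:ℝ)^j * (r.choose j : ℝ) * (((k:ℝ)+1) * (y + (r:ℝ)/2 - (j:ℝ))^k)) y := by
    intro j _
    have h0 : HasDerivAt (fun x : ℝ => x + (r:ℝ)/2 - (j:ℝ)) 1 y := by
      simpa using ((hasDerivAt_id y).add_const ((r:ℝ)/2)).sub_const (j:ℝ)
    have h1 := h0.pow (k+1)
    have h2 := h1.const_mul ((-1:ℝ)^j * (r.choose j : ℝ))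
    simpa [mul_comm, mul_assoc, mul_left_comm] using h2
  have h : HasDerivAt (fun x : ℝ => (_ : ℝ)) _ y := HasDerivAt.fun_sum hterm
  convert h using 1
  · rfl
  unfold Bsum
  rw [Finset.mul_sum]
  apply Finset.sum_congr rfl
  intro j _
  ring

lemma linear_of_deriv (F : ℝ → ℝ) (c : ℝ)
    (h : ∀ y, HasDerivAt F c y) (x : ℝ) : F x = F 0 + c * x := by
  have hg : ∀ y : ℝ, HasDerivAt (fun t => F t - c * t) 0 y := by
    intro y
    have := (h y).fun_sub ((hasDerivAt_id y).const_mul c)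
    simpa using this
  have hc := is_const_of_deriv_eq_zero (f := fun t => F t - c * t)
    (fun y => (hg y).differentiableAt) (fun y => (hg y).deriv) x 0
  simp at hc
  linarith

lemma Bsum_zero (n k : ℕ) (hodd : Odd (n + k)) : Bsum n k 0 = 0 := by
  have key : (2:ℝ) * Bsum n k 0 = 0 := by
    have hrefl := Finset.sum_range_reflect
      (fun j => (-1 : ℝ) ^ j * (n.choose j : ℝ) * ((0:ℝ) + (n : ℝ)/2 - (j : ℝ)) ^ k) (n+1)
    simp only [Nat.add_sub_cancel] at hrefl
    have e0 : Bsum n k 0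
        = ∑ j ∈ Finset.range (n+1),
            (-1 : ℝ) ^ j * (n.choose j : ℝ) * ((0:ℝ) + (n : ℝ)/2 - (j : ℝ)) ^ k := rfl
    have e1 : Bsum n k 0
        = ∑ j ∈ Finset.range (n+1),
            (-1 : ℝ) ^ (n-j) * (n.choose (n-j) : ℝ) * ((0:ℝ) + (n : ℝ)/2 - ((n-j : ℕ) : ℝ)) ^ k := by
      rw [e0, ← hrefl]
    have h2 : (2:ℝ) * Bsum n k 0
        = ∑ j ∈ Finset.range (n+1),
            (((-1 : ℝ) ^ j * (n.choose j : ℝ) * ((0:ℝ) + (n : ℝ)/2 - (j : ℝ)) ^ k)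
             + ((-1 : ℝ) ^ (n-j) * (n.choose (n-j) : ℝ) * ((0:ℝ) + (n : ℝ)/2 - ((n-j : ℕ) : ℝ)) ^ k)) := by
      rw [two_mul]
      nth_rewrite 2 [e1]
      rw [e0, ← Finset.sum_add_distrib]
    rw [h2]
    apply Finset.sum_eq_zero
    intro j hj
    rw [Finset.mem_range, Nat.lt_succ_iff] at hj
    have hc : (n.choose (n - j) : ℝ) = (n.choose j : ℝ) := by rw [Nat.choose_symm hj]
    have hcast : ((n - j : ℕ) : ℝ) = (n : ℝ) - j := by
      push_cast [hj]; ring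
    have hp1 : (-1:ℝ)^(n-j) * (-1:ℝ)^j = (-1:ℝ)^n := by
      rw [← pow_add, Nat.sub_add_cancel hj]
    have hp2 : (-1:ℝ)^j * (-1:ℝ)^j = 1 := by
      rw [← pow_add, ← two_mul, pow_mul]; norm_num
    have hpow : (-1:ℝ)^(n-j) = (-1:ℝ)^n * (-1:ℝ)^j := by
      calc (-1:ℝ)^(n-j) = (-1:ℝ)^(n-j) * ((-1:ℝ)^j * (-1:ℝ)^j) := by rw [hp2, mul_one]
        _ = ((-1:ℝ)^(n-j) * (-1:ℝ)^j) * (-1:ℝ)^j := by ring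
        _ = (-1:ℝ)^n * (-1:ℝ)^j := by rw [hp1]
    have hbase : ((0:ℝ) + (n : ℝ)/2 - ((n-j : ℕ) : ℝ)) = -((0:ℝ) + (n : ℝ)/2 - (j : ℝ)) := by
      rw [hcast]; ring
    have hneg : (-((0:ℝ) + (n : ℝ)/2 - (j : ℝ)))^k
        = (-1:ℝ)^k * ((0:ℝ) + (n : ℝ)/2 - (j : ℝ))^k := by
      rw [← neg_one_mul, mul_pow]
    have hsign : (-1:ℝ)^n * (-1:ℝ)^k = -1 := by
      rw [← pow_add]; exact Odd.neg_one_pow hodd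
    rw [hpow, hc, hbase, hneg]
    linear_combination ((-1:ℝ)^j * (n.choose j : ℝ) * ((0:ℝ) + (n:ℝ)/2 - (j:ℝ))^k) * hsign
  linarith

lemma Bsum_main (r : ℕ) :
    (∀ x : ℝ, Bsum r r x = (r.factorial : ℝ)) ∧
    (∀ x : ℝ, Bsum r (r+1) x = ((r+1).factorial : ℝ) * x) := by
  induction r with
  | zero =>
    constructor <;> intro x <;> simp [Bsum]
  | succ r ih =>
    have ha : ∀ x : ℝ, Bsum (r+1) (r+1) x = ((r+1).factorial : ℝ) := by
      intro x
      rw [Bsum_pascal, ih.2, ih.2]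
      ring
    constructor
    · exact ha
    · intro x
      have hd : ∀ y : ℝ, HasDerivAt (fun x => Bsum (r+1) (r+1+1) x)
          (((r+2).factorial : ℝ)) y := by
        intro y
        have := Bsum_hasDerivAt (r+1) (r+1) y
        rw [ha y] at this
        convert this using 1
        rw [Nat.factorial_succ (r+1)]
        push_cast
        ring
      have hl := linear_of_deriv _ _ hd x
      have h0 : Bsum (r+1) (r+1+1) 0 = 0 := by
        apply Bsum_zero
        refine ⟨r+1, by ring⟩
      rw [hl, h0]
      ring

theorem central_difference_binomial_sum (r : ℕ) (x : ℝ) :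
    ∑ j ∈ Finset.range (r+1),
        (-1 : ℝ) ^ j * (r.choose j : ℝ) * (x + (r : ℝ)/2 - (j : ℝ)) ^ (r+1)
      = (Nat.factorial (r+1) : ℝ) * x := by
  exact (Bsum_main r).2 x
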